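/- Naturality of modified interlacement matrices (combinatorial form of Corollary 5): let G be a simple graph on a finite vertex set V, t a transition function on V, and v₁, …, v_k a finite sequence of vertices. Define G₀ = G, t₀ = t, and G_i = (G_{i-1})^{v_i}, t_i = (t_{i-1})^{G_{i-1}, v_i} for 1 ≤ i ≤ k. Let φ̄ be the constant transition function with value φ, and define s₀ = φ̄, s_i = (s_{i-1})^{G_{i-1}, v_i} for 1 ≤ i ≤ k. Then M(G_k, t_k) = M(G_k, s_k) · M(G₀, t₀). (In the paper's notation, with C' obtained from C by the κ-transformations at v₁,…,v_k, this is M(C', P) = M(C', C) · M(C, P).) -/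

import Mathlib

open scoped Classical

/-- The three transitions at a vertex, labeled relative to an Euler system. -/
inductive Transition : Type
  | phi | chi | psi
  deriving DecidableEq

variable {V : Type*} [Fintype V] [DecidableEq V]

/-- Simple local complement `G^v`: toggle adjacency between distinct neighbors of `v`. -/
def localComp (G : SimpleGraph V) (v : V) : SimpleGraph V where
  Adj u w := u ≠ w ∧ Xor' (G.Adj u w) (G.Adj v u ∧ G.Adj v w)
  symm := by
    constructor
    rintro u w ⟨hne, hx⟩
    refine ⟨hne.symm, ?_⟩
    rw [G.adj_comm w u, and_comm]
    exact hx
  loopless := by constructor; rintro u ⟨hne, _⟩; exact hne rfl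

/-- Modified interlacement matrix `M(G, t)` over GF(2). -/
noncomputable def Mmat (G : SimpleGraph V) (t : V → Transition) : Matrix V V (ZMod 2) :=
  Matrix.of fun w u =>
    if w = u then (if t u = Transition.chi then 0 else 1)
    else if t u = Transition.phi then 0
    else if G.Adj w u then 1 else 0

/-- Updated transition function `t^{G,v}`. -/
noncomputable def updT (G : SimpleGraph V) (v : V) (t : V → Transition) : V → Transition :=
  fun u =>
    if u = v then
      match t u with
      | Transition.phi => Transition.psi
      | Transition.psi => Transition.phi
      | Transition.chi => Transition.chi
    else if G.Adj v u then
      match t u with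
      | Transition.chi => Transition.psi
      | Transition.psi => Transition.chi
      | Transition.phi => Transition.phi
    else t u

/-- Modified local complement of a matrix, taken with respect to `G` at `v`:
add row `v` to the row of every neighbor of `v` in `G`. -/
noncomputable def modLC (G : SimpleGraph V) (v : V) (M : Matrix V V (ZMod 2)) :
    Matrix V V (ZMod 2) :=
  Matrix.of fun w u => if G.Adj v w then M w u + M v u else M w u

/-- One κ-step at `v` applied to a graph together with two transition functions:
`(G, t, s) ↦ (G^v, t^{G,v}, s^{G,v})`. -/
noncomputable def stepGTS (v : V) (p : SimpleGraph V × (V → Transition) × (V → Transition)) :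
    SimpleGraph V × (V → Transition) × (V → Transition) :=
  (localComp p.1 v, updT p.1 v p.2.1, updT p.1 v p.2.2)

set_option maxHeartbeats 1000000 in
lemma Mmat_key (G : SimpleGraph V) (v : V) (t : V → Transition) :
    Mmat (localComp G v) (updT G v t) = modLC G v (Mmat G t) := by
  ext w u
  rcases htu : t u with _ | _ | _ <;>
    simp only [Mmat, modLC, updT, localComp, Matrix.of_apply, htu] <;>
    by_cases hwu : w = u <;> by_cases huv : u = v <;>
    (try have huv2 : ¬ v = u := fun h => huv h.symm) <;>
    (try have hwu2 : ¬ u = w := fun h => hwu h.symm) <;>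
    by_cases hvu : G.Adj v u <;> by_cases hvw : G.Adj v w <;>
    by_cases hwu' : G.Adj w u <;>
    simp_all [Xor', SimpleGraph.adj_comm, SimpleGraph.irrefl] <;>
    decide

lemma modLC_mul (G : SimpleGraph V) (v : V) (A B : Matrix V V (ZMod 2)) :
    modLC G v (A * B) = modLC G v A * B := by
  ext w u
  simp only [modLC, Matrix.of_apply, Matrix.mul_apply]
  split
  · rw [← Finset.sum_add_distrib]
    exact Finset.sum_congr rfl fun x _ => by ring
  · rfl

lemma Mmat_phi (G : SimpleGraph V) :
    Mmat G (fun _ => Transition.phi) = 1 := by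
  ext w u
  simp [Mmat, Matrix.one_apply]

lemma Mmat_aux (vs : List V) (G : SimpleGraph V) (t s : V → Transition)
    (B : Matrix V V (ZMod 2)) (h : Mmat G t = Mmat G s * B) :
    Mmat (vs.foldl (fun q v => stepGTS v q) (G, t, s)).1
        (vs.foldl (fun q v => stepGTS v q) (G, t, s)).2.1
      = Mmat (vs.foldl (fun q v => stepGTS v q) (G, t, s)).1
          (vs.foldl (fun q v => stepGTS v q) (G, t, s)).2.2 * B := by
  induction vs generalizing G t s with
  | nil => exact h
  | cons v vs ih =>
    simp only [List.foldl_cons, stepGTS]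
    exact ih _ _ _ (by rw [Mmat_key, Mmat_key, h, modLC_mul])

/-- naturality, Corollary 5: with `G₀ = G`, `t₀ = t`, `s₀ = φ̄` (the constant
`φ` transition), and `G_i = G_{i-1}^{v_i}`, `t_i = t_{i-1}^{G_{i-1},v_i}`,
`s_i = s_{i-1}^{G_{i-1},v_i}`, we have `M(G_k, t_k) = M(G_k, s_k) · M(G₀, t₀)`. -/

theorem Mmat_naturality (G : SimpleGraph V) (t : V → Transition) (vs : List V) :
    let p := vs.foldl (fun q v => stepGTS v q) (G, t, fun _ => Transition.phi)
    Mmat p.1 p.2.1 = Mmat p.1 p.2.2 * Mmat G t := by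
  exact Mmat_aux vs G t _ (Mmat G t) (by rw [Mmat_phi, one_mul])
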